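/- Let ρ₁, ρ₂ ∈ (−1,1) with ρ₁² < ρ₂. Then for every k ∈ ℕ the (k+1)×(k+1) matrix Σ with first row/column (1, ρ₁,…,ρ₁) and lower-right k×k block the exchangeable correlation matrix (1 on the diagonal, ρ₂ off-diagonal) is positive definite. -/

import Mathlib

open Matrix

/-- let `ρ₁, ρ₂ ∈ (−1,1)` with `ρ₁² < ρ₂`.  Then for every `k ∈ ℕ` the
`(k+1)×(k+1)` matrix with first row/column `(1, ρ₁, …, ρ₁)` and exchangeable lower-right
block (diagonal `1`, off-diagonal `ρ₂`) is positive definite. -/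
theorem stmt17 (ρ₁ ρ₂ : ℝ) (h₁ : ρ₁ ∈ Set.Ioo (-1 : ℝ) 1) (h₂ : ρ₂ ∈ Set.Ioo (-1 : ℝ) 1)
    (h : ρ₁ ^ 2 < ρ₂) :
    ∀ k : ℕ, Matrix.PosDef (Matrix.of fun i j : Fin (k + 1) =>
      if i = j then (1 : ℝ) else if i = 0 ∨ j = 0 then ρ₁ else ρ₂) := by
  intro k
  set M : Matrix (Fin (k+1)) (Fin (k+1)) ℝ := Matrix.of fun i j : Fin (k + 1) =>
      if i = j then (1 : ℝ) else if i = 0 ∨ j = 0 then ρ₁ else ρ₂ with hMdef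
  have hM : ∀ i j, M i j = ρ₂ + (1-ρ₂)*(if i = j then (1:ℝ) else 0)
      + (ρ₁-ρ₂)*((if i = 0 then (1:ℝ) else 0)+(if j = 0 then (1:ℝ) else 0))
      + 2*(ρ₂-ρ₁)*((if i = 0 then (1:ℝ) else 0)*(if j = 0 then (1:ℝ) else 0)) := by
    intro i j
    simp only [hMdef, Matrix.of_apply]
    split_ifs <;> simp_all <;> ring
  rw [Matrix.posDef_iff_dotProduct_mulVec]
  constructor
  · show Mᴴ = M
    ext i j
    simp only [hMdef, Matrix.conjTranspose_apply, Matrix.of_apply, star_trivial]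
    split_ifs <;> simp_all
  · intro x hx
    have hst : star x = x := by simp
    have key : x ⬝ᵥ M *ᵥ x = ρ₂*(∑ i, x i)^2 + (1-ρ₂)*(∑ i, x i ^ 2)
        + 2*(ρ₁-ρ₂)*(x 0)*(∑ i, x i) + 2*(ρ₂-ρ₁)*(x 0)^2 := by
      simp only [dotProduct, mulVec, hM]
      simp only [add_mul, mul_add, ite_mul, mul_ite, mul_zero, zero_mul, mul_one, one_mul,
        Finset.sum_add_distrib, Finset.mul_sum, Finset.sum_ite_eq, Finset.sum_ite_eq',
        Finset.mem_univ, if_true, sq, Finset.sum_mul_sum]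
      simp only [Finset.sum_ite_irrel, Finset.sum_const_zero, Finset.sum_ite_eq',
        Finset.mem_univ, if_true, ← Finset.sum_mul, ← Finset.mul_sum]
      have hT : ∑ i : Fin (k+1), x i * ((1-ρ₂) * x i) = (1-ρ₂) * ∑ i : Fin (k+1), x i * x i := by
        rw [Finset.mul_sum]; exact Finset.sum_congr rfl (fun i _ => by ring)
      rw [hT]; ring
    rw [hst, key]
    have hS : ∑ i, x i = x 0 + ∑ i ∈ Finset.univ.erase 0, x i :=
      (Finset.add_sum_erase _ _ (Finset.mem_univ 0)).symm
    have hT2 : ∑ i, x i ^ 2 = x 0 ^ 2 + ∑ i ∈ Finset.univ.erase 0, x i ^ 2 :=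
      (Finset.add_sum_erase _ _ (Finset.mem_univ 0)).symm
    set s := ∑ i ∈ Finset.univ.erase 0, x i with hsdef
    set t := ∑ i ∈ Finset.univ.erase 0, x i ^ 2 with htdef
    rw [hS, hT2]
    have ht : 0 ≤ t := Finset.sum_nonneg fun i _ => sq_nonneg _
    have hQ : ρ₂*(x 0 + s)^2 + (1-ρ₂)*(x 0 ^ 2 + t) + 2*(ρ₁-ρ₂)*(x 0)*(x 0 + s)
        + 2*(ρ₂-ρ₁)*(x 0)^2 = (x 0 + ρ₁*s)^2 + (ρ₂-ρ₁^2)*s^2 + (1-ρ₂)*t := by ring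
    rw [hQ]
    have hρ₂pos : 0 < ρ₂ := lt_of_le_of_lt (sq_nonneg ρ₁) h
    obtain ⟨i, hi⟩ := Function.ne_iff.mp hx
    simp only [Pi.zero_apply] at hi
    by_cases hi0 : i = 0
    · subst hi0
      have hx0 : 0 < x 0 ^ 2 := lt_of_le_of_ne (sq_nonneg _) (Ne.symm (pow_ne_zero 2 hi))
      nlinarith [sq_nonneg (ρ₁ * x 0 + ρ₂ * s), mul_pos (sub_pos.mpr h) hx0,
        mul_nonneg (mul_nonneg hρ₂pos.le (sub_nonneg.mpr h₂.2.le)) ht, hρ₂pos]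
    · have hle : x i ^ 2 ≤ t := Finset.single_le_sum (fun j _ => sq_nonneg (x j))
        (Finset.mem_erase.mpr ⟨hi0, Finset.mem_univ i⟩)
      have hxi : 0 < x i ^ 2 := lt_of_le_of_ne (sq_nonneg _) (Ne.symm (pow_ne_zero 2 hi))
      nlinarith [sq_nonneg (x 0 + ρ₁ * s), sq_nonneg s, h₂.2, h]
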